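/- Let f : {-1,1}^5 → {-1,1} be defined by f(x) = sgn(x_1 - 3x_2 + x_3 - x_4 + 3x_5). Then Φ_{2/5}(f) = 2689/6250. -/

import Mathlib

open Finset

noncomputable section

/-- Sign function: `1` for positive arguments, `-1` otherwise. -/
def sgn (t : ℝ) : ℝ := if 0 < t then 1 else -1

/-- Real value of a Boolean sign: `true ↦ 1`, `false ↦ -1`. -/
def val (b : Bool) : ℝ := if b then 1 else -1

/-- Fourier coefficient `f̂(S) = 2^{-n} ∑_{x ∈ {-1,1}^n} f(x) ∏_{i∈S} x_i`. -/
def fCoeff (n : ℕ) (f : (Fin n → ℝ) → ℝ) (S : Finset (Fin n)) : ℝ :=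
  (2 ^ n : ℝ)⁻¹ * ∑ b : Fin n → Bool, f (fun i => val (b i)) * ∏ i ∈ S, val (b i)

/-- Multilinear extension `F(z) = ∑_S f̂(S) ∏_{i∈S} z_i`. -/
def mlin (n : ℕ) (f : (Fin n → ℝ) → ℝ) (z : Fin n → ℝ) : ℝ :=
  ∑ S : Finset (Fin n), fCoeff n f S * ∏ i ∈ S, z i

/-- Value of an erasure symbol: `0 ↦ 0`, `1 ↦ 1`, `2 ↦ -1`. -/
def eval3 (k : Fin 3) : ℝ := if k = 0 then 0 else if k = 1 then 1 else -1

/-- Erasure weight: `Pr[z_i = 0] = 1 - p`, `Pr[z_i = 1] = Pr[z_i = -1] = p/2`. -/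
def wt (p : ℝ) (k : Fin 3) : ℝ := if k = 0 then 1 - p else p / 2

/-- `Φ_p(f) = E_z |F(z)|` under the erasure distribution at rate `p`. -/
def Phi (n : ℕ) (p : ℝ) (f : (Fin n → ℝ) → ℝ) : ℝ :=
  ∑ e : Fin n → Fin 3, (∏ i, wt p (e i)) * |mlin n f (fun i => eval3 (e i))|

/-- `f(x) = sgn(x₁ - 3x₂ + x₃ - x₄ + 3x₅)`. -/
def f5 (x : Fin 5 → ℝ) : ℝ := sgn (x 0 - 3 * x 1 + x 2 - x 3 + 3 * x 4)

/-- `Maj₅(x) = sgn(x₁ + x₂ + x₃ + x₄ + x₅)`. -/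
def maj5 (x : Fin 5 → ℝ) : ℝ := sgn (x 0 + x 1 + x 2 + x 3 + x 4)

lemma sum_pi_succ {α : Type*} [Fintype α] {n : ℕ} (g : (Fin (n+1) → α) → ℝ) :
    ∑ e : Fin (n+1) → α, g e = ∑ a : α, ∑ e : Fin n → α, g (Fin.cons a e) := by
  rw [← (Fin.consEquiv (fun _ => α)).sum_comp, Fintype.sum_prod_type]; rfl

lemma sum_pi_zero {α : Type*} [Fintype α] (g : (Fin 0 → α) → ℝ) :
    ∑ e : Fin 0 → α, g e = g ![] := by rw [Fintype.sum_subsingleton _ ![]]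

lemma sum_pi_five {α : Type*} [Fintype α] (g : (Fin 5 → α) → ℝ) :
    ∑ e : Fin 5 → α, g e =
      ∑ a : α, ∑ b : α, ∑ c : α, ∑ d : α, ∑ e : α, g ![a,b,c,d,e] := by
  rw [sum_pi_succ]; refine Finset.sum_congr rfl fun a _ => ?_
  rw [sum_pi_succ]; refine Finset.sum_congr rfl fun b _ => ?_
  rw [sum_pi_succ]; refine Finset.sum_congr rfl fun c _ => ?_
  rw [sum_pi_succ]; refine Finset.sum_congr rfl fun d _ => ?_
  rw [sum_pi_succ]; refine Finset.sum_congr rfl fun e _ => ?_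
  rw [sum_pi_zero]; rfl

def eFS : (Fin 5 → Bool) ≃ Finset (Fin 5) where
  toFun b := Finset.univ.filter (fun i => b i)
  invFun S i := i ∈ S
  left_inv b := by funext i; simp
  right_inv S := by ext i; simp

set_option maxHeartbeats 4000000 in
lemma mlin_f5 (z : Fin 5 → ℝ) : mlin 5 f5 z =
    1/4*z 0 - 1/2*z 1 + 1/4*z 2 - 1/4*z 3 + 1/2*z 4 + 1/4*(z 0*z 2*z 3)
      + 1/4*(z 0*z 1*z 4) + 1/4*(z 1*z 2*z 4) - 1/4*(z 1*z 3*z 4)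
      + 1/4*(z 0*z 1*z 2*z 3*z 4) := by
  rw [mlin, ← Equiv.sum_comp eFS, sum_pi_five]
  simp only [eFS, Equiv.coe_fn_mk, fCoeff, sum_pi_five, Fintype.sum_bool, f5, sgn, _root_.val,
    Finset.prod_filter, Fin.prod_univ_five, Matrix.cons_val_zero, Matrix.cons_val_one,
    Matrix.head_cons, Matrix.cons_val_two, Matrix.cons_val_three, Matrix.cons_val_four,
    Matrix.tail_cons, if_true, if_false, Bool.false_eq_true]
  norm_num
  ring

lemma eval3_zero : eval3 0 = 0 := rfl
lemma eval3_one : eval3 1 = 1 := rfl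
lemma eval3_two : eval3 2 = -1 := rfl
lemma wt_zero (p : ℝ) : wt p 0 = 1 - p := rfl
lemma wt_one (p : ℝ) : wt p 1 = p / 2 := rfl
lemma wt_two (p : ℝ) : wt p 2 = p / 2 := rfl

set_option maxHeartbeats 16000000 in
theorem stmt1 : Phi 5 (2/5) f5 = 2689 / 6250 := by
  rw [Phi, sum_pi_five]
  simp only [mlin_f5, Fin.sum_univ_three, Fin.prod_univ_five,
    Matrix.cons_val_zero, Matrix.cons_val_one, Matrix.head_cons, Matrix.cons_val_two,
    Matrix.cons_val_three, Matrix.cons_val_four, Matrix.tail_cons,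
    eval3_zero, eval3_one, eval3_two, wt_zero, wt_one, wt_two]
  norm_num
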